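/- Let K be a kernel on ℝ² and let f : ℝ² → [0,∞] be measurable with ∫_{ℝ²} K(x,x)(1−e^{−f(x)}) dx < ∞. For k ∈ ℕ define f_k(x) = f(x) for x ∈ B(0,k) and f_k(x) = 0 otherwise, and define S(g) = Σ_{n=0}^∞ ((−1)^n/n!) ∫_{(ℝ²)^n} det(K(x_i,x_j))_{1≤i,j≤n} Π_{i=1}^n (1−e^{−g(x_i)}) dx_1⋯dx_n for measurable g with 0 ≤ g ≤ f. Then lim_{k→∞} S(f_k) = S(f); that is, the Fredholm-type series is continuous under truncation of f to large balls. -/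

import Mathlib

open MeasureTheory Measure Metric Filter
open scoped ENNReal NNReal Real Topology BigOperators ComplexOrder

noncomputable section

abbrev E2 : Type := EuclideanSpace ℝ (Fin 2)

/-- `expNeg a = e^{-a}` for `a ∈ [0,∞]`, with `expNeg ∞ = 0`. -/
def expNeg (a : ℝ≥0∞) : ℝ := if a = ∞ then 0 else Real.exp (-a.toReal)

structure IsKernel (K : E2 → E2 → ℂ) : Prop where
  continuous : Continuous fun p : E2 × E2 => K p.1 p.2
  hermitian : ∀ x y : E2, K y x = starRingEnd ℂ (K x y)
  locSqInt : ∀ s : Set (E2 × E2), IsCompact s →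
    IntegrableOn (fun p : E2 × E2 => ‖K p.1 p.2‖ ^ 2) s
  posSemidef : ∀ (n : ℕ) (x : Fin n → E2),
    (Matrix.of fun i j : Fin n => K (x i) (x j)).PosSemidef

/-- The Fredholm-type series
`S(g) = Σ_{n≥0} ((-1)^n/n!) ∫_{(ℝ²)^n} det(K(x_i,x_j)) ∏ (1-e^{-g(x_i)}) dx`. -/
def fredholmSeries (K : E2 → E2 → ℂ) (g : E2 → ℝ≥0∞) : ℂ :=
  ∑' n : ℕ, ((-1 : ℂ) ^ n / n.factorial) *
    ∫ x : Fin n → E2,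
      (Matrix.of fun i j : Fin n => K (x i) (x j)).det *
        ∏ i : Fin n, ((1 - expNeg (g (x i)) : ℝ) : ℂ)

/-! ### Auxiliary lemmas about `expNeg` -/

lemma expNeg_nonneg (a : ℝ≥0∞) : 0 ≤ expNeg a := by
  unfold expNeg; split
  · exact le_rfl
  · exact (Real.exp_pos _).le

lemma expNeg_le_one (a : ℝ≥0∞) : expNeg a ≤ 1 := by
  unfold expNeg; split
  · exact zero_le_one
  · exact Real.exp_le_one_iff.2 (neg_nonpos.2 ENNReal.toReal_nonneg)

lemma expNeg_anti {a b : ℝ≥0∞} (h : a ≤ b) : expNeg b ≤ expNeg a := by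
  by_cases hb : b = ∞
  · rw [hb, expNeg, if_pos rfl]; exact expNeg_nonneg a
  · have ha : a ≠ ∞ := fun h' => hb (top_le_iff.mp (h' ▸ h))
    rw [expNeg, expNeg, if_neg ha, if_neg hb]
    exact Real.exp_le_exp.2 (neg_le_neg (ENNReal.toReal_le_toReal ha hb |>.2 h))

lemma measurable_expNeg : Measurable expNeg := by
  have h : MeasurableSet {a : ℝ≥0∞ | a = ∞} := by
    rw [Set.setOf_eq_eq_singleton]; exact measurableSet_singleton _
  exact Measurable.ite h measurable_const
    (Real.measurable_exp.comp ENNReal.measurable_toReal.neg)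

lemma one_sub_expNeg_nonneg (a : ℝ≥0∞) : 0 ≤ 1 - expNeg a :=
  sub_nonneg.2 (expNeg_le_one a)

/-! ### Hadamard's inequality for positive semidefinite complex matrices -/

section Hadamard
open Matrix

lemma psd_diag_real {n : Type*} [Fintype n] {M : Matrix n n ℂ}
    (hM : M.PosSemidef) (i : n) : M i i = ((M i i).re : ℂ) := by
  have h := hM.1.apply i i
  exact (Complex.conj_eq_iff_re.mp h).symm

lemma psd_diag_nonneg {n : Type*} [Fintype n] [DecidableEq n] {M : Matrix n n ℂ}
    (hM : M.PosSemidef) (i : n) : 0 ≤ (M i i).re := by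
  have h := hM.dotProduct_mulVec_nonneg (Pi.single i 1)
  have he : dotProduct (star (Pi.single i 1 : n → ℂ))
      (M.mulVec (Pi.single i 1)) = M i i := by
    have hs : star (Pi.single i 1 : n → ℂ) = Pi.single i 1 := by
      funext j; by_cases h : j = i <;> simp [Pi.single_apply, h]
    rw [hs]
    simp [dotProduct, Matrix.mulVec, Pi.single_apply, ite_mul, Finset.sum_ite_eq]
  rw [he] at h
  simpa using (Complex.le_def.mp h).1

lemma trace_eq_sum_eigenvalues {n : Type*} [Fintype n] [DecidableEq n]
    {A : Matrix n n ℂ} (hA : A.IsHermitian) :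
    A.trace = ((∑ i, hA.eigenvalues i : ℝ) : ℂ) := by
  rw [hA.trace_eq_sum_eigenvalues, Complex.ofReal_sum]
  rfl

/-- Hadamard's inequality for positive semidefinite matrices. -/
lemma norm_det_le_prod_diag {n : ℕ} {M : Matrix (Fin n) (Fin n) ℂ}
    (hM : M.PosSemidef) : ‖M.det‖ ≤ ∏ i, (M i i).re := by
  rcases Nat.eq_zero_or_pos n with hn | hn
  · subst hn; simp [Matrix.det_fin_zero]
  set d : Fin n → ℝ := fun i => (M i i).re with hd
  have hd0 : ∀ i, 0 ≤ d i := fun i => psd_diag_nonneg hM i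
  by_cases hz : ∃ i, d i = 0
  · obtain ⟨i, hi⟩ := hz
    obtain ⟨S, hS, hSS⟩ : ∃ S : Matrix (Fin n) (Fin n) ℂ, S.PosSemidef ∧ S * S = M := by
      open scoped MatrixOrder in
      exact ⟨CFC.sqrt M, (CFC.sqrt_nonneg M).posSemidef, CFC.sqrt_mul_sqrt_self M hM.nonneg⟩
    have hrow : ∀ k, S i k = 0 := by
      have hMii : (M i i).re = ∑ k, ‖S i k‖ ^ 2 := by
        have : M i i = ∑ k, S i k * S k i := by
          rw [← hSS]; rfl
        rw [this]
        have : ∀ k, S i k * S k i = (‖S i k‖ ^ 2 : ℝ) := by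
          intro k
          rw [← hS.1.apply k i]
          rw [show star (S i k) = (starRingEnd ℂ) (S i k) from rfl, Complex.mul_conj,
            Complex.normSq_eq_norm_sq]
        rw [Finset.sum_congr rfl fun k _ => this k, Complex.re_sum]
        exact Finset.sum_congr rfl fun k _ => by rw [Complex.ofReal_re]
      intro k
      have h0 : ∑ k, ‖S i k‖ ^ 2 = 0 := by rw [← hMii]; exact hi
      have := (Finset.sum_eq_zero_iff_of_nonneg
        (fun k _ => sq_nonneg ‖S i k‖)).mp h0 k (Finset.mem_univ k)
      simpa [pow_eq_zero_iff] using this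
    have : M.det = 0 := by
      rw [← hSS, Matrix.det_mul]
      rw [Matrix.det_eq_zero_of_row_eq_zero i hrow]
      ring
    rw [this, norm_zero]
    exact Finset.prod_nonneg fun i _ => hd0 i
  · push_neg at hz
    have hdpos : ∀ i, 0 < d i := fun i => lt_of_le_of_ne (hd0 i) (Ne.symm (hz i))
    set W : Matrix (Fin n) (Fin n) ℂ :=
      Matrix.diagonal (fun i => (((Real.sqrt (d i))⁻¹ : ℝ) : ℂ)) with hW
    have hWH : Wᴴ = W := by
      ext i j
      by_cases h : i = j
      · simp [Matrix.conjTranspose_apply, hW, Matrix.diagonal_apply, h, Complex.conj_ofReal]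
      · simp only [Matrix.conjTranspose_apply, hW, Matrix.diagonal_apply, h, if_false]
        rw [if_neg (fun hji => h hji.symm), star_zero]
    set N := W * M * W with hNdef
    have hN : N.PosSemidef := by
      have := hM.mul_mul_conjTranspose_same W
      rwa [hWH] at this
    have hsq : ∀ i, (Real.sqrt (d i))⁻¹ * (Real.sqrt (d i))⁻¹ * d i = 1 := by
      intro i
      rw [← mul_inv, Real.mul_self_sqrt (hd0 i)]
      exact inv_mul_cancel₀ (ne_of_gt (hdpos i))
    have hNdiag : ∀ i, N i i = 1 := by
      intro i
      rw [hNdef, Matrix.mul_diagonal, Matrix.diagonal_mul, psd_diag_real hM i]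
      push_cast [← hd]
      rw [show ((Real.sqrt (d i) : ℝ)⁻¹ : ℂ) * (d i : ℂ) * ((Real.sqrt (d i) : ℝ)⁻¹ : ℂ)
          = (((Real.sqrt (d i))⁻¹ * (Real.sqrt (d i))⁻¹ * d i : ℝ) : ℂ) by push_cast; ring,
        hsq i]
      norm_num
    set lam := hN.1.eigenvalues with hlam
    have hlam0 : ∀ i, 0 ≤ lam i := hN.eigenvalues_nonneg
    have htr : ∑ i, lam i = n := by
      have h1 : N.trace = ((∑ i, lam i : ℝ) : ℂ) := trace_eq_sum_eigenvalues hN.1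
      have h2 : N.trace = n := by
        rw [Matrix.trace]
        rw [Finset.sum_congr rfl fun i _ => by rw [Matrix.diag_apply, hNdiag i]]
        simp
      rw [h2] at h1
      exact_mod_cast h1.symm
    have hdetN : ‖N.det‖ = ∏ i, lam i := by
      rw [hN.1.det_eq_prod_eigenvalues]
      rw [norm_prod]
      exact Finset.prod_congr rfl fun i _ => by
        rw [RCLike.norm_ofReal, abs_of_nonneg (hlam0 i)]
    have hamgm : ∏ i, lam i ≤ 1 := by
      have hw : ∀ i ∈ (Finset.univ : Finset (Fin n)), (0:ℝ) ≤ (n : ℝ)⁻¹ := fun _ _ => by positivity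
      have hw' : ∑ _i : Fin n, (n : ℝ)⁻¹ = 1 := by
        rw [Finset.sum_const, Finset.card_univ, Fintype.card_fin, nsmul_eq_mul]
        field_simp
      have h := Real.geom_mean_le_arith_mean_weighted Finset.univ
        (fun _ => (n : ℝ)⁻¹) lam hw hw' (fun i _ => hlam0 i)
      have hsum : ∑ i, (n:ℝ)⁻¹ * lam i = 1 := by
        rw [← Finset.mul_sum, htr]
        field_simp
      rw [hsum] at h
      have hprod : ∏ i, lam i ^ ((n:ℝ)⁻¹) = (∏ i, lam i) ^ ((n:ℝ)⁻¹) :=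
        Real.finset_prod_rpow Finset.univ lam (fun i _ => hlam0 i) ((n:ℝ)⁻¹)
      rw [hprod] at h
      have hP0 : 0 ≤ ∏ i, lam i := Finset.prod_nonneg fun i _ => hlam0 i
      calc ∏ i, lam i = ((∏ i, lam i) ^ ((n:ℝ)⁻¹)) ^ (n : ℝ) := by
            rw [← Real.rpow_mul hP0, inv_mul_cancel₀ (by exact_mod_cast hn.ne' : (n:ℝ) ≠ 0),
              Real.rpow_one]
        _ ≤ 1 := Real.rpow_le_one (Real.rpow_nonneg hP0 _) h (by positivity)
    have hP : (0:ℝ) < ∏ i, d i := Finset.prod_pos fun i _ => hdpos i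
    have hdetW : ‖W.det‖ = ∏ i, (Real.sqrt (d i))⁻¹ := by
      rw [hW, Matrix.det_diagonal, ← Complex.ofReal_prod, Complex.norm_real]
      exact abs_of_nonneg (Finset.prod_nonneg fun i _ => by positivity)
    have hc : ‖N.det‖ = (∏ i, d i)⁻¹ * ‖M.det‖ := by
      rw [hNdef, Matrix.det_mul, Matrix.det_mul, norm_mul, norm_mul, hdetW]
      rw [show (∏ i, (Real.sqrt (d i))⁻¹) * ‖M.det‖ * (∏ i, (Real.sqrt (d i))⁻¹)
          = ((∏ i, (Real.sqrt (d i))⁻¹) * ∏ i, (Real.sqrt (d i))⁻¹) * ‖M.det‖ from by ring]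
      congr 1
      rw [← Finset.prod_mul_distrib, ← Finset.prod_inv_distrib]
      exact Finset.prod_congr rfl fun i _ => by
        rw [← mul_inv, Real.mul_self_sqrt (hd0 i)]
    have hMdet : ‖M.det‖ = (∏ i, d i) * ‖N.det‖ := by
      rw [hc, ← mul_assoc, mul_inv_cancel₀ hP.ne', one_mul]
    calc ‖M.det‖ = (∏ i, d i) * ‖N.det‖ := hMdet
      _ = (∏ i, d i) * ∏ i, lam i := by rw [hdetN]
      _ ≤ (∏ i, d i) * 1 := mul_le_mul_of_nonneg_left hamgm hP.le
      _ = ∏ i, d i := mul_one _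

end Hadamard

/-- Continuity of the Fredholm series under truncation: if
`∫ K(x,x)(1−e^{−f(x)}) dx < ∞` and `f_k` is the restriction of `f` to the closed ball
`B(0,k)` (set to `0` outside), then `S(f_k) → S(f)` as `k → ∞`. -/
theorem stmt_13 (K : E2 → E2 → ℂ) (hK : IsKernel K)
    (f : E2 → ℝ≥0∞) (hf : Measurable f)
    (hM : ∫⁻ x : E2, ENNReal.ofReal ((K x x).re * (1 - expNeg (f x))) ≠ ∞) :
    Tendsto
      (fun k : ℕ =>
        fredholmSeries K fun x => if ‖x‖ ≤ (k : ℝ) then f x else 0)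
      atTop (nhds (fredholmSeries K f)) := by
  classical
  have hD_cont : Continuous fun x : E2 => (K x x).re :=
    Complex.continuous_re.comp (hK.continuous.comp (continuous_id.prodMk continuous_id))
  have hD_nonneg : ∀ x : E2, 0 ≤ (K x x).re := by
    intro x
    have h := psd_diag_nonneg (hK.posSemidef 1 (fun _ => x)) 0
    simpa using h
  set φ : E2 → ℝ := fun x => (K x x).re * (1 - expNeg (f x)) with hφdef
  have hφ_nonneg : ∀ x, 0 ≤ φ x := fun x =>
    mul_nonneg (hD_nonneg x) (one_sub_expNeg_nonneg _)
  have hφ_meas : Measurable φ :=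
    hD_cont.measurable.mul (measurable_const.sub (measurable_expNeg.comp hf))
  have hφ_int : Integrable φ := by
    refine ⟨hφ_meas.aestronglyMeasurable, ?_⟩
    rw [hasFiniteIntegral_iff_ofReal (ae_of_all _ hφ_nonneg)]
    exact lt_top_iff_ne_top.mpr hM
  set Mb : ℝ := ∫ x, φ x with hMb
  have hMb0 : 0 ≤ Mb := integral_nonneg hφ_nonneg
  -- per-n dominator
  have hΦ_int : ∀ n : ℕ, Integrable (fun x : Fin n → E2 => ∏ i, φ (x i)) := fun n =>
    Integrable.fintype_prod (f := fun _ : Fin n => φ) fun _ => hφ_int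
  have hΦ_eq : ∀ n : ℕ, (∫ x : Fin n → E2, ∏ i, φ (x i)) = Mb ^ n := by
    intro n
    exact (MeasureTheory.integral_fintype_prod_eq_pow (ι := Fin n) φ (μ := volume)).trans (by rw [Fintype.card_fin])
  -- key pointwise bound
  have key : ∀ (g : E2 → ℝ≥0∞), (∀ x, g x ≤ f x) → ∀ (n : ℕ) (x : Fin n → E2),
      ‖(Matrix.of fun i j : Fin n => K (x i) (x j)).det *
        ∏ i : Fin n, ((1 - expNeg (g (x i)) : ℝ) : ℂ)‖ ≤ ∏ i, φ (x i) := by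
    intro g hg n x
    rw [norm_mul]
    have hdet : ‖(Matrix.of fun i j : Fin n => K (x i) (x j)).det‖
        ≤ ∏ i, (K (x i) (x i)).re := by
      have h := norm_det_le_prod_diag (hK.posSemidef n x)
      simpa using h
    have hprod : ‖∏ i : Fin n, ((1 - expNeg (g (x i)) : ℝ) : ℂ)‖
        ≤ ∏ i, (1 - expNeg (f (x i))) := by
      rw [norm_prod]
      refine Finset.prod_le_prod (fun i _ => norm_nonneg _) (fun i _ => ?_)
      rw [Complex.norm_real, Real.norm_eq_abs, abs_of_nonneg (one_sub_expNeg_nonneg _)]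
      exact sub_le_sub_left (expNeg_anti (hg _)) 1
    calc ‖(Matrix.of fun i j : Fin n => K (x i) (x j)).det‖ *
          ‖∏ i : Fin n, ((1 - expNeg (g (x i)) : ℝ) : ℂ)‖
        ≤ (∏ i, (K (x i) (x i)).re) * ∏ i, (1 - expNeg (f (x i))) :=
          mul_le_mul hdet hprod (norm_nonneg _)
            (Finset.prod_nonneg fun i _ => hD_nonneg _)
      _ = ∏ i, φ (x i) := by rw [← Finset.prod_mul_distrib]
  -- measurability of the integrands
  have meas : ∀ (g : E2 → ℝ≥0∞), Measurable g → ∀ n : ℕ, AEStronglyMeasurable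
      (fun x : Fin n → E2 => (Matrix.of fun i j : Fin n => K (x i) (x j)).det *
        ∏ i : Fin n, ((1 - expNeg (g (x i)) : ℝ) : ℂ)) volume := by
    intro g hg n
    apply Measurable.aestronglyMeasurable
    apply Measurable.mul
    · have hc : Continuous fun x : Fin n → E2 =>
          (Matrix.of fun i j : Fin n => K (x i) (x j)) := by
        apply continuous_matrix
        intro i j
        simp only [Matrix.of_apply]
        have h1 : Continuous fun x : Fin n → E2 => ((x i, x j) : E2 × E2) :=
          (continuous_apply i).prodMk (continuous_apply j)
        exact hK.continuous.comp h1
      exact hc.matrix_det.measurable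
    · apply Finset.measurable_prod
      intro i _
      exact Complex.measurable_ofReal.comp
        (measurable_const.sub (measurable_expNeg.comp (hg.comp (measurable_pi_apply i))))
  have hgk_meas : ∀ k : ℕ, Measurable fun x : E2 => if ‖x‖ ≤ (k:ℝ) then f x else 0 := by
    intro k
    exact Measurable.ite (measurableSet_le measurable_norm measurable_const) hf measurable_const
  have hgk_le : ∀ (k : ℕ) (x : E2), (if ‖x‖ ≤ (k:ℝ) then f x else 0) ≤ f x := by
    intro k x; split
    · exact le_rfl
    · exact zero_le
  simp only [fredholmSeries]
  apply tendsto_tsum_of_dominated_convergence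
    (bound := fun n : ℕ => Mb ^ n / n.factorial)
  · exact Real.summable_pow_div_factorial Mb
  · -- per-term convergence
    intro n
    apply Filter.Tendsto.const_mul
    apply tendsto_integral_of_dominated_convergence (bound := fun x : Fin n → E2 => ∏ i, φ (x i))
    · exact fun k => meas _ (hgk_meas k) n
    · exact hΦ_int n
    · exact fun k => ae_of_all _ (key _ (hgk_le k) n)
    · apply ae_of_all
      intro x
      have hev : ∀ᶠ k : ℕ in atTop, ∀ i, ‖x i‖ ≤ (k:ℝ) := by
        rw [eventually_all]
        intro i
        exact tendsto_natCast_atTop_atTop.eventually_ge_atTop ‖x i‖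
      refine Filter.Tendsto.congr' ?_ tendsto_const_nhds
      filter_upwards [hev] with k hk
      congr 1
      refine Finset.prod_congr rfl fun i _ => ?_
      rw [if_pos (hk i)]
  · -- uniform bound
    apply Filter.Eventually.of_forall
    intro k n
    rw [norm_mul]
    have hcn : ‖((-1 : ℂ) ^ n / (n.factorial : ℂ))‖ = 1 / n.factorial := by
      rw [norm_div, norm_pow, norm_neg, norm_one, one_pow, Complex.norm_natCast]
    rw [hcn]
    have hIle : ‖∫ x : Fin n → E2,
        (Matrix.of fun i j : Fin n => K (x i) (x j)).det *
          ∏ i : Fin n, ((1 - expNeg ((if ‖x i‖ ≤ (k:ℝ) then f (x i) else 0)) : ℝ) : ℂ)‖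
        ≤ Mb ^ n := by
      refine (norm_integral_le_integral_norm _).trans ?_
      refine le_trans (integral_mono_of_nonneg (ae_of_all _ fun x => norm_nonneg _)
        (hΦ_int n) (ae_of_all _ (key _ (hgk_le k) n))) ?_
      exact le_of_eq (hΦ_eq n)
    calc (1 / (n.factorial : ℝ)) * _ ≤ (1 / (n.factorial : ℝ)) * Mb ^ n := by
          apply mul_le_mul_of_nonneg_left hIle (by positivity)
      _ = Mb ^ n / n.factorial := by ring
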